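/- arXiv:0904.0912 — 2 statements merged into one kernel-verified Lean document; each statement's English description precedes it below -/
import Mathlib

section
/- Let P be one of the groups of Theorem 1 with center Z and kernel N ⊂ Z of the map to E_8, over a smooth complex projective curve X of genus g. For any M_X(N)-linearization of the line bundle L_P, the subspace of M_X(N)-invariant sections of H^0(M_X(P), L_P) is one-dimensional. (Lemma 5.2) -/
/-!
Lemma 5.2 of Boysal–Pauly: let `P` be one of the groups of Theorem 1 with center `Z`
and kernel `N ⊂ Z` of the map to `E₈`, over a smooth complex projective curve `X` of
genus `g`.  For any `M_X(N)`-linearization of the line bundle `L_P`, the subspace of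
`M_X(N)`-invariant sections of `H⁰(M_X(P), L_P)` is one-dimensional.
-/

/-- The five groups `P` of Theorem 1 having non-trivial kernel `N`:
`Spin(16)`, `SL(9)`, `SL(5)×SL(5)`, `SL(3)×E₆`, `SL(2)×E₇`. -/
inductive ConformalGroup : Type
  | spin16 | sl9 | sl5sl5 | sl3e6 | sl2e7

/-- The order of the center `Z` of `P`. -/
def centerOrder : ConformalGroup → ℕ
  | .spin16 => 4
  | .sl9 => 9
  | .sl5sl5 => 25
  | .sl3e6 => 9
  | .sl2e7 => 4

/-- The order of the kernel `N ⊂ Z` of `φ : P → E₈`; one has `|N| = |Z|^{1/2}`. -/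
def kernelOrder : ConformalGroup → ℕ
  | .spin16 => 2
  | .sl9 => 3
  | .sl5sl5 => 5
  | .sl3e6 => 3
  | .sl2e7 => 2

/-- Abstract Heisenberg data for Lemma 5.2: the Verlinde space
`V = H⁰(M_X(P), L_P)` of dimension `|Z|^g`, the finite abelian group `M_X(Z)` of
order `|Z|^{2g}` with its maximal isotropic subgroup `M_X(N)` of order `|N|^{2g}`,
and the Mumford group `G(L_P) = {(ζ,ψ) : ζ ∈ M_X(Z), ψ : t_ζ* L_P ≅ L_P}`, a central
extension of `M_X(Z)` by `ℂ*` acting irreducibly on `V` with `ℂ*` acting by scalar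
multiplication. -/
structure MumfordSetup (g : ℕ) (P : ConformalGroup) where
  /-- The space of global sections `V = H⁰(M_X(P), L_P)`. -/
  V : Type
  [addV : AddCommGroup V]
  [modV : Module ℂ V]
  [fdV : FiniteDimensional ℂ V]
  /-- By the Verlinde formula, `dim H⁰(M_X(P), L_P) = |Z|^g`. -/
  dim_V : Module.finrank ℂ V = (centerOrder P) ^ g
  /-- The finite abelian group `M_X(Z)` of principal `Z`-bundles over `X`. -/
  MZ : Type
  [grpMZ : CommGroup MZ]
  [finMZ : Fintype MZ]
  card_MZ : Fintype.card MZ = (centerOrder P) ^ (2 * g)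
  /-- The subgroup `M_X(N) ⊂ M_X(Z)` of principal `N`-bundles, of order
  `|N|^{2g} = |Z|^g`. -/
  MN : Subgroup MZ
  card_MN : Nat.card MN = (kernelOrder P) ^ (2 * g)
  /-- The Mumford group `G(L_P)`. -/
  G : Type
  [grpG : Group G]
  /-- The projection `G(L_P) → M_X(Z)`. -/
  π : G →* MZ
  π_surj : Function.Surjective π
  /-- The central `ℂ*` of `G(L_P)`. -/
  c : ℂˣ →* G
  c_central : ∀ t : ℂˣ, c t ∈ Subgroup.center G
  c_ker : ∀ x : G, π x = 1 ↔ x ∈ Set.range c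
  /-- The action of the Mumford group on global sections, `s ↦ ψ(t_ζ*(s))`. -/
  ρ : Representation ℂ G V
  /-- The center `ℂ*` acts by scalar multiplication. -/
  ρ_scalar : ∀ t : ℂˣ, ρ (c t) = (t : ℂ) • (LinearMap.id : V →ₗ[ℂ] V)
  /-- `H⁰(M_X(P), L_P)` is an irreducible representation of `G(L_P)` (it is the
  unique irreducible level-one representation of the finite Heisenberg group). -/
  irreducible : ∀ W : Submodule ℂ V, (∀ (x : G), ∀ v ∈ W, ρ x v ∈ W) → W = ⊥ ∨ W = ⊤
  /-- `M_X(N)` is isotropic: any two elements of the Mumford group lying over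
  `M_X(N)` commute. -/
  MN_isotropic : ∀ x y : G, π x ∈ MN → π y ∈ MN → x * y = y * x

attribute [instance] MumfordSetup.addV MumfordSetup.modV MumfordSetup.fdV
  MumfordSetup.grpMZ MumfordSetup.finMZ MumfordSetup.grpG

open Module

private lemma exists_common_eigenvector {V : Type} [AddCommGroup V] [Module ℂ V]
    [FiniteDimensional ℂ V] [Nontrivial V] (T : Set (Module.End ℂ V))
    (hT : ∀ f ∈ T, ∀ g ∈ T, f * g = g * f) :
    ∃ v : V, v ≠ 0 ∧ ∀ f ∈ T, ∃ μ : ℂ, f v = μ • v := by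
  suffices H : ∀ (d : ℕ) (W : Submodule ℂ V), Module.finrank ℂ W = d → W ≠ ⊥ →
      (∀ f ∈ T, ∀ w ∈ W, f w ∈ W) →
      ∃ v : V, v ∈ W ∧ v ≠ 0 ∧ ∀ f ∈ T, ∃ μ : ℂ, f v = μ • v by
    obtain ⟨v, -, hv0, hv⟩ := H (Module.finrank ℂ (⊤ : Submodule ℂ V)) ⊤ rfl
      (by simp) (fun f _ w _ => Submodule.mem_top)
    exact ⟨v, hv0, hv⟩
  intro d
  induction d using Nat.strong_induction_on with
  | _ d ih =>
    intro W hdW hWbot hWinv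
    by_cases hsc : ∀ f ∈ T, ∃ μ : ℂ, ∀ w ∈ W, f w = μ • w
    · obtain ⟨v, hvW, hv0⟩ := Submodule.exists_mem_ne_zero_of_ne_bot hWbot
      exact ⟨v, hvW, hv0, fun f hf => (hsc f hf).imp fun μ h => h v hvW⟩
    · push_neg at hsc
      obtain ⟨f₀, hf₀, hns⟩ := hsc
      haveI : Nontrivial W := Submodule.nontrivial_iff_ne_bot.mpr hWbot
      set f' : Module.End ℂ W := f₀.restrict (hWinv f₀ hf₀) with hf'
      obtain ⟨μ, hμ⟩ := Module.End.exists_eigenvalue f'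
      obtain ⟨w, hw⟩ := hμ.exists_hasEigenvector
      set W' : Submodule ℂ V := W ⊓ LinearMap.ker (f₀ - μ • (LinearMap.id : V →ₗ[ℂ] V)) with hW'
      have hmem : ∀ x : V, x ∈ W' ↔ x ∈ W ∧ f₀ x = μ • x := by
        intro x
        simp [hW', LinearMap.mem_ker, sub_eq_zero, LinearMap.sub_apply]
      have hfw : f₀ (w : V) = μ • (w : V) := by
        have h1 : f' w = μ • w := hw.apply_eq_smul
        have := congrArg (Subtype.val) h1
        simpa [hf', LinearMap.restrict_coe_apply] using this
      have hw'mem : (w : V) ∈ W' := (hmem _).mpr ⟨w.2, hfw⟩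
      have hW'lt : W' < W := by
        refine lt_of_le_of_ne inf_le_left ?_
        intro h
        obtain ⟨x, hxW, hx⟩ := hns μ
        exact hx ((hmem x).mp (h ▸ hxW)).2
      have hW'bot : W' ≠ ⊥ := by
        rw [Submodule.ne_bot_iff]
        exact ⟨w, hw'mem, by simpa using hw.right⟩
      have hinv' : ∀ f ∈ T, ∀ x ∈ W', f x ∈ W' := by
        intro f hf x hx
        rw [hmem] at hx ⊢
        refine ⟨hWinv f hf x hx.1, ?_⟩
        have hc : f₀ (f x) = f (f₀ x) := by
          have h2 := hT f₀ hf₀ f hf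
          calc f₀ (f x) = (f₀ * f) x := rfl
            _ = (f * f₀) x := by rw [h2]
            _ = f (f₀ x) := rfl
        rw [hc, hx.2, map_smul]
      have hd' : Module.finrank ℂ W' < d := hdW ▸ Submodule.finrank_lt_finrank_of_lt hW'lt
      obtain ⟨v, hvW', rest⟩ := ih _ hd' W' rfl hW'bot hinv'
      exact ⟨v, ((hmem v).mp hvW').1, rest⟩

namespace MumfordSetup

variable {g : ℕ} {P : ConformalGroup}

private lemma centerOrder_pos (P : ConformalGroup) : 0 < centerOrder P := by
  cases P <;> norm_num [centerOrder]

private lemma nontrivialV (S : MumfordSetup g P) : Nontrivial S.V := by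
  rw [← Module.finrank_pos_iff (R := ℂ), S.dim_V]
  exact pow_pos (centerOrder_pos P) g

private lemma ρ_ne_zero (S : MumfordSetup g P) (x : S.G) {u : S.V} (hu : u ≠ 0) :
    S.ρ x u ≠ 0 := by
  intro h
  apply hu
  have h2 : S.ρ x⁻¹ (S.ρ x u) = u := by
    rw [← Module.End.mul_apply, ← map_mul, inv_mul_cancel, map_one, Module.End.one_apply]
  rw [h, map_zero] at h2
  exact h2.symm

/-- The common eigenvector over an isotropic subgroup, and the fact that its orbit spans. -/
private lemma exists_span (S : MumfordSetup g P) (M : Subgroup S.MZ)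
    (hM : ∀ a b : S.G, S.π a ∈ M → S.π b ∈ M → a * b = b * a) :
    ∃ v : S.V, v ≠ 0 ∧ (∀ a : S.G, S.π a ∈ M → ∃ μ : ℂ, S.ρ a v = μ • v) ∧
      ⊤ ≤ Submodule.span ℂ (Set.range fun q : S.MZ ⧸ M =>
            S.ρ (Function.surjInv S.π_surj q.out) v) := by
  classical
  haveI : Nontrivial S.V := S.nontrivialV
  obtain ⟨v, hv0, hvT⟩ := exists_common_eigenvector (S.ρ '' {a : S.G | S.π a ∈ M})
    (by rintro _ ⟨a, ha, rfl⟩ _ ⟨b, hb, rfl⟩; rw [← map_mul, ← map_mul, hM a b ha hb])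
  have hev : ∀ a : S.G, S.π a ∈ M → ∃ μ : ℂ, S.ρ a v = μ • v := fun a ha =>
    hvT (S.ρ a) ⟨a, ha, rfl⟩
  set σ : S.MZ → S.G := Function.surjInv S.π_surj with hσdef
  have hσ : ∀ z, S.π (σ z) = z := Function.rightInverse_surjInv S.π_surj
  set e : (S.MZ ⧸ M) → S.V := fun q => S.ρ (σ q.out) v with he
  refine ⟨v, hv0, hev, ?_⟩
  have hinvW : ∀ (x : S.G), ∀ u ∈ Submodule.span ℂ (Set.range e), S.ρ x u ∈ Submodule.span ℂ (Set.range e) := by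
    intro x u hu
    induction hu using Submodule.span_induction with
    | mem u hu =>
      obtain ⟨q, rfl⟩ := hu
      set q' : S.MZ ⧸ M := QuotientGroup.mk (S.π x * q.out) with hq'
      have hb : S.π ((σ q'.out)⁻¹ * (x * σ q.out)) ∈ M := by
        rw [map_mul, map_inv, hσ, map_mul, hσ, ← QuotientGroup.eq, QuotientGroup.out_eq', hq']
      obtain ⟨μ, hμ⟩ := hev _ hb
      have hre : S.ρ x (e q) = μ • e q' := by
        have hx2 : x * σ q.out = σ q'.out * ((σ q'.out)⁻¹ * (x * σ q.out)) := by group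
        rw [he]
        simp only [← Module.End.mul_apply, ← map_mul]
        rw [hx2, map_mul, Module.End.mul_apply, hμ, map_smul]
      rw [hre]
      exact Submodule.smul_mem _ μ (Submodule.subset_span ⟨q', rfl⟩)
    | zero => simp
    | add u w _ _ hu hw => rw [map_add]; exact Submodule.add_mem _ hu hw
    | smul c u _ hu => rw [map_smul]; exact Submodule.smul_mem _ c hu
  rcases S.irreducible (Submodule.span ℂ (Set.range e)) hinvW with h | h
  · exfalso
    have hmem : e (1 : S.MZ ⧸ M) ∈ Submodule.span ℂ (Set.range e) :=
      Submodule.subset_span ⟨_, rfl⟩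
    rw [h] at hmem
    exact S.ρ_ne_zero _ hv0 (by simpa using hmem)
  · exact h.ge

private lemma core_bound (S : MumfordSetup g P) (M : Subgroup S.MZ)
    (hM : ∀ a b : S.G, S.π a ∈ M → S.π b ∈ M → a * b = b * a) :
    Module.finrank ℂ S.V ≤ Nat.card (S.MZ ⧸ M) := by
  classical
  obtain ⟨v, hv0, hev, hspan⟩ := S.exists_span M hM
  haveI : Fintype (S.MZ ⧸ M) := Fintype.ofFinite _
  set e : (S.MZ ⧸ M) → S.V := fun q => S.ρ (Function.surjInv S.π_surj q.out) v with he
  have h1 : Module.finrank ℂ S.V = Set.finrank ℂ (Set.range e) := by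
    rw [Set.finrank, top_le_iff.mp hspan, finrank_top]
  rw [h1, Nat.card_eq_fintype_card]
  exact finrank_range_le_card e

private lemma kernel_sq (P : ConformalGroup) : centerOrder P = kernelOrder P ^ 2 := by
  cases P <;> rfl

private lemma kernel_pos (P : ConformalGroup) : 0 < kernelOrder P := by
  cases P <;> norm_num [kernelOrder]

private lemma dimV_eq (S : MumfordSetup g P) :
    Module.finrank ℂ S.V = kernelOrder P ^ (2 * g) := by
  rw [S.dim_V, kernel_sq, ← pow_mul, mul_comm 2 g, pow_mul, ← pow_mul, mul_comm g 2]

private lemma cardMZ_eq (S : MumfordSetup g P) :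
    Nat.card S.MZ = kernelOrder P ^ (2 * g) * kernelOrder P ^ (2 * g) := by
  rw [Nat.card_eq_fintype_card, S.card_MZ, kernel_sq, ← pow_mul, ← pow_add]
  congr 1
  ring

/-- If an element of `G` commutes with the image of the linearization `s`,
then it lies over `M_X(N)`. -/
private lemma commutes_imp_mem (S : MumfordSetup g P) (s : S.MN →* S.G)
    (hs : ∀ n : S.MN, S.π (s n) = (n : S.MZ)) (x : S.G)
    (hx : ∀ m : S.MN, Commute x (s m)) : S.π x ∈ S.MN := by
  by_contra hz
  set M' : Subgroup S.MZ := S.MN ⊔ Subgroup.zpowers (S.π x) with hM'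
  have hcomm : ∀ a b : S.G, S.π a ∈ M' → S.π b ∈ M' → a * b = b * a := by
    have hdec : ∀ a : S.G, S.π a ∈ M' →
        ∃ (m : S.MN) (k : ℤ) (t : ℂˣ), a = s m * x ^ k * S.c t := by
      intro a ha
      rw [hM', Subgroup.mem_sup] at ha
      obtain ⟨y, hy, z, hz', hyz⟩ := ha
      obtain ⟨k, hk⟩ := hz'
      have h1 : S.π ((s ⟨y, hy⟩ * x ^ k)⁻¹ * a) = 1 := by
        rw [map_mul, map_inv, map_mul, map_zpow, hs]
        rw [← hk] at hyz
        rw [hyz]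
        group
      rw [S.c_ker] at h1
      obtain ⟨t, ht⟩ := h1
      refine ⟨⟨y, hy⟩, k, t, ?_⟩
      rw [ht]
      group
    intro a b ha hb
    obtain ⟨m₁, k₁, t₁, rfl⟩ := hdec a ha
    obtain ⟨m₂, k₂, t₂, rfl⟩ := hdec b hb
    have hc : ∀ (t : ℂˣ) (y : S.G), Commute y (S.c t) := fun t y =>
      (Subgroup.mem_center_iff.mp (S.c_central t) y)
    have hss : ∀ m m' : S.MN, Commute (s m) (s m') := fun m m' => by
      unfold Commute SemiconjBy
      rw [← map_mul, ← map_mul, mul_comm]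
    have hxs : ∀ (m : S.MN) (k : ℤ), Commute (x ^ k) (s m) := fun m k =>
      ((hx m).zpow_left k)
    have h1 : Commute (s m₁) (s m₂ * x ^ k₂ * S.c t₂) :=
      ((hss m₁ m₂).mul_right (hxs m₁ k₂).symm).mul_right (hc t₂ _)
    have h2 : Commute (x ^ k₁) (s m₂ * x ^ k₂ * S.c t₂) :=
      ((hxs m₂ k₁).mul_right (Commute.zpow_zpow_self x k₁ k₂)).mul_right (hc t₂ _)
    have h3 : Commute (S.c t₁) (s m₂ * x ^ k₂ * S.c t₂) := (hc t₁ _).symm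
    exact ((h1.mul_left h2).mul_left h3 : _)
  have hb := S.core_bound M' hcomm
  have hlag : Nat.card S.MZ = Nat.card (S.MZ ⧸ M') * Nat.card M' :=
    Subgroup.card_eq_card_quotient_mul_card_subgroup M'
  have hlt : Nat.card S.MN < Nat.card M' := by
    have hsub : (S.MN : Set S.MZ) ⊂ (M' : Set S.MZ) := by
      rw [Set.ssubset_iff_of_subset]
      · exact ⟨S.π x, Subgroup.mem_sup_right (Subgroup.mem_zpowers _), hz⟩
      · intro y hy
        exact Subgroup.mem_sup_left hy
    have := Set.ncard_lt_ncard hsub (Set.toFinite _)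
    rw [← Nat.card_coe_set_eq, ← Nat.card_coe_set_eq] at this
    exact this
  rw [S.card_MN] at hlt
  have hQ : kernelOrder P ^ (2 * g) ≤ Nat.card (S.MZ ⧸ M') := S.dimV_eq ▸ hb
  have hMZ := S.cardMZ_eq
  have hp : 0 < kernelOrder P ^ (2 * g) := pow_pos (kernel_pos P) _
  nlinarith [hlag, hMZ, hQ, hlt, hp]

end MumfordSetup

/-- **Lemma 5.2**: for any `M_X(N)`-linearization of `L_P` (i.e. any lift
`s : M_X(N) → G(L_P)` of the inclusion `M_X(N) ⊂ M_X(Z)`), the subspace of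
`M_X(N)`-invariant sections of `H⁰(M_X(P), L_P)` is one-dimensional. -/
theorem lemma_5_2 (g : ℕ) (P : ConformalGroup) (S : MumfordSetup g P)
    (s : S.MN →* S.G) (hs : ∀ n : S.MN, S.π (s n) = (n : S.MZ)) :
    Module.finrank ℂ
      (Representation.invariants ((S.ρ.comp s : S.MN →* Module.End ℂ S.V) :
        Representation ℂ S.MN S.V)) = 1 := by
  classical
  set τ : Representation ℂ S.MN S.V := S.ρ.comp s with hτ
  haveI : Nontrivial S.V := S.nontrivialV
  obtain ⟨v, hv0, hev, hspan⟩ := S.exists_span S.MN S.MN_isotropic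
  set σ : S.MZ → S.G := Function.surjInv S.π_surj with hσdef
  have hσ : ∀ z, S.π (σ z) = z := Function.rightInverse_surjInv S.π_surj
  haveI : Fintype (S.MZ ⧸ S.MN) := Fintype.ofFinite _
  haveI : Fintype S.MN := Fintype.ofFinite _
  set e : (S.MZ ⧸ S.MN) → S.V := fun q => S.ρ (σ q.out) v with he
  have henz : ∀ q, e q ≠ 0 := fun q => S.ρ_ne_zero _ hv0
  have hspan' : ⊤ ≤ Submodule.span ℂ (Set.range e) := hspan
  have hcardMN : Nat.card S.MN = kernelOrder P ^ (2 * g) := S.card_MN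
  have hcardQ : Fintype.card (S.MZ ⧸ S.MN) = Module.finrank ℂ S.V := by
    have hlag : Nat.card S.MZ = Nat.card (S.MZ ⧸ S.MN) * Nat.card S.MN :=
      Subgroup.card_eq_card_quotient_mul_card_subgroup S.MN
    rw [S.cardMZ_eq, hcardMN] at hlag
    have hp : 0 < kernelOrder P ^ (2 * g) := pow_pos (MumfordSetup.kernel_pos P) _
    have hq : Nat.card (S.MZ ⧸ S.MN) = kernelOrder P ^ (2 * g) :=
      Nat.eq_of_mul_eq_mul_right hp hlag.symm
    rw [← Nat.card_eq_fintype_card, hq, S.dimV_eq]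
  set bas : Basis (S.MZ ⧸ S.MN) ℂ S.V := basisOfTopLeSpanOfCardEqFinrank e hspan' hcardQ
    with hbasdef
  have hbas : ∀ q, bas q = e q := fun q =>
    congrFun (coe_basisOfTopLeSpanOfCardEqFinrank e hspan' hcardQ) q
  -- eigenvalues
  have heig : ∀ (q : S.MZ ⧸ S.MN) (m : S.MN), ∃ μ : ℂ, τ m (e q) = μ • e q := by
    intro q m
    have hmem : S.π ((σ q.out)⁻¹ * (s m * σ q.out)) ∈ S.MN := by
      rw [map_mul, map_inv, map_mul, hσ, hs]
      have h2 : (q.out)⁻¹ * ((m : S.MZ) * q.out) = (m : S.MZ) := by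
        rw [mul_comm (m : S.MZ) q.out, ← mul_assoc, inv_mul_cancel, one_mul]
      rw [h2]
      exact m.2
    obtain ⟨μ, hμ⟩ := hev _ hmem
    refine ⟨μ, ?_⟩
    show S.ρ (s m) (e q) = μ • e q
    rw [he]
    simp only [← Module.End.mul_apply, ← map_mul]
    have hx2 : s m * σ q.out = σ q.out * ((σ q.out)⁻¹ * (s m * σ q.out)) := by group
    rw [hx2, map_mul, Module.End.mul_apply, hμ, map_smul]
  set χ : (S.MZ ⧸ S.MN) → S.MN → ℂ := fun q m => Classical.choose (heig q m) with hχdef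
  have hχ : ∀ q m, τ m (e q) = χ q m • e q := fun q m => Classical.choose_spec (heig q m)
  have hsmulinj : ∀ (q : S.MZ ⧸ S.MN) (a b : ℂ), a • e q = b • e q → a = b :=
    fun q a b hab => smul_left_injective ℂ (henz q) hab
  have hvinj : ∀ a b : ℂ, a • v = b • v → a = b :=
    fun a b hab => smul_left_injective ℂ hv0 hab
  have hχ1 : ∀ q, χ q 1 = 1 := by
    intro q
    apply hsmulinj q
    rw [← hχ, map_one, Module.End.one_apply, one_smul]
  have hχmul : ∀ q m m', χ q (m * m') = χ q m * χ q m' := by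
    intro q m m'
    apply hsmulinj q
    rw [← hχ q (m * m'), map_mul, Module.End.mul_apply, hχ q m', map_smul, hχ q m,
      smul_smul, mul_comm (χ q m') (χ q m)]
  have hχ0 : ∀ q m, χ q m ≠ 0 := by
    intro q m h
    have h2 := hχmul q m m⁻¹
    rw [mul_inv_cancel, hχ1, h, zero_mul] at h2
    exact one_ne_zero h2
  -- scalar of conjugated element
  have hconj : ∀ (q : S.MZ ⧸ S.MN) (m : S.MN),
      S.ρ ((σ q.out)⁻¹ * (s m * σ q.out)) v = χ q m • v := by
    intro q m
    have h1 : S.ρ (s m) (S.ρ (σ q.out) v) = χ q m • S.ρ (σ q.out) v := hχ q m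
    calc S.ρ ((σ q.out)⁻¹ * (s m * σ q.out)) v
        = S.ρ (σ q.out)⁻¹ (S.ρ (s m) (S.ρ (σ q.out) v)) := by
          simp only [← Module.End.mul_apply, ← map_mul, mul_assoc]
      _ = S.ρ (σ q.out)⁻¹ (χ q m • S.ρ (σ q.out) v) := by rw [h1]
      _ = χ q m • (S.ρ (σ q.out)⁻¹ (S.ρ (σ q.out) v)) := by rw [map_smul]
      _ = χ q m • v := by
          rw [← Module.End.mul_apply, ← map_mul, inv_mul_cancel, map_one, Module.End.one_apply]
  -- eigenvalue of s m on v
  have hevm : ∀ m : S.MN, ∃ μ : ℂ, S.ρ (s m) v = μ • v := by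
    intro m
    exact hev (s m) (by rw [hs]; exact m.2)
  set χv : S.MN → ℂ := fun m => Classical.choose (hevm m) with hχvdef
  have hχv : ∀ m, S.ρ (s m) v = χv m • v := fun m => Classical.choose_spec (hevm m)
  have hχv0 : ∀ m, χv m ≠ 0 := by
    intro m h
    apply S.ρ_ne_zero (s m) hv0
    rw [hχv, h, zero_smul]
  -- the central twist
  have ht : ∀ (q : S.MZ ⧸ S.MN) (m : S.MN), ∃ t : ℂˣ,
      (σ q.out)⁻¹ * (s m * σ q.out) = S.c t * s m ∧ (t : ℂ) * χv m = χ q m := by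
    intro q m
    have hker : S.π ((σ q.out)⁻¹ * (s m * σ q.out) * (s m)⁻¹) = 1 := by
      rw [map_mul, map_mul, map_inv, map_mul, map_inv, hσ, hs]
      rw [mul_comm (m : S.MZ) q.out, ← mul_assoc, inv_mul_cancel, one_mul, mul_inv_cancel]
    rw [S.c_ker] at hker
    obtain ⟨t, htc⟩ := hker
    have heq : (σ q.out)⁻¹ * (s m * σ q.out) = S.c t * s m := by
      rw [htc]; group
    refine ⟨t, heq, ?_⟩
    apply hvinj
    have h2 : S.ρ (S.c t * s m) v = ((t : ℂ) * χv m) • v := by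
      rw [map_mul, Module.End.mul_apply, hχv, map_smul, S.ρ_scalar]
      simp [smul_smul, mul_comm]
    rw [← h2, ← heq, hconj]
  -- distinctness of characters
  have hdist : ∀ q q' : S.MZ ⧸ S.MN, (∀ m, χ q m = χ q' m) → q = q' := by
    intro q q' hqq
    have key : ∀ m : S.MN, Commute (σ q.out * (σ q'.out)⁻¹) (s m) := by
      intro m
      obtain ⟨t, htc, htv⟩ := ht q m
      obtain ⟨t', htc', htv'⟩ := ht q' m
      have htt : t = t' := by
        apply Units.ext
        have h3 : (t : ℂ) * χv m = (t' : ℂ) * χv m := by rw [htv, htv', hqq]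
        exact mul_right_cancel₀ (hχv0 m) h3
      subst htt
      show (σ q.out * (σ q'.out)⁻¹) * s m = s m * (σ q.out * (σ q'.out)⁻¹)
      calc (σ q.out * (σ q'.out)⁻¹) * s m
          = σ q.out * ((σ q'.out)⁻¹ * (s m * σ q'.out)) * (σ q'.out)⁻¹ := by group
        _ = σ q.out * (S.c t * s m) * (σ q'.out)⁻¹ := by rw [htc']
        _ = σ q.out * ((σ q.out)⁻¹ * (s m * σ q.out)) * (σ q'.out)⁻¹ := by rw [htc]
        _ = s m * (σ q.out * (σ q'.out)⁻¹) := by group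
    have hmem := S.commutes_imp_mem s hs _ key
    rw [map_mul, map_inv, hσ, hσ] at hmem
    have hmem2 : (q'.out)⁻¹ * q.out ∈ S.MN := by
      rw [mul_comm] at hmem
      exact hmem
    have : q' = q := by
      rw [← QuotientGroup.out_eq' q, ← QuotientGroup.out_eq' q', QuotientGroup.eq]
      exact hmem2
    exact this.symm
  -- characters as monoid homs
  set χhom : (S.MZ ⧸ S.MN) → (S.MN →* ℂ) := fun q =>
    { toFun := χ q, map_one' := hχ1 q, map_mul' := hχmul q } with hχhomdef
  -- existence of a trivial character
  have hone : ∃ q₀, χhom q₀ = 1 := by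
    by_contra hno
    push_neg at hno
    set F : Option (S.MZ ⧸ S.MN) → (S.MN →* ℂ) := fun o => o.elim 1 χhom with hF
    have hFinj : Function.Injective F := by
      intro o o' hoo
      cases o with
      | none =>
        cases o' with
        | none => rfl
        | some q => exact absurd hoo.symm (hno q)
      | some q =>
        cases o' with
        | none => exact absurd hoo (hno q)
        | some q' => exact congrArg some (hdist q q' fun m => DFunLike.congr_fun hoo m)
    have hLI : LinearIndependent ℂ (fun o => ⇑(F o)) :=
      (linearIndependent_monoidHom S.MN ℂ).comp F hFinj
    have hle := hLI.fintype_card_le_finrank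
    rw [Module.finrank_fintype_fun_eq_card, Fintype.card_option, hcardQ] at hle
    have h1 : Fintype.card S.MN = Module.finrank ℂ S.V := by
      rw [← Nat.card_eq_fintype_card, hcardMN, S.dimV_eq]
    omega
  obtain ⟨q₀, hq₀⟩ := hone
  have hq₀' : ∀ m, χ q₀ m = 1 := fun m => DFunLike.congr_fun hq₀ m
  -- nontrivial characters for q ≠ q₀
  have hnt : ∀ q, q ≠ q₀ → ∃ m, χ q m ≠ 1 := by
    intro q hq
    by_contra hall
    push_neg at hall
    exact hq (hdist q q₀ fun m => by rw [hall m, hq₀' m])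
  -- invariants
  have hinv_eq : Representation.invariants τ = Submodule.span ℂ {e q₀} := by
    apply le_antisymm
    · intro w hw
      rw [Representation.mem_invariants] at hw
      have hcoord : ∀ (m : S.MN) (q : S.MZ ⧸ S.MN),
          bas.repr w q * χ q m = bas.repr w q := by
        intro m q
        have hexp : w = ∑ q', (bas.repr w q' * χ q' m) • bas q' := by
          conv_lhs => rw [← hw m, ← bas.sum_repr w]
          rw [map_sum]
          refine Finset.sum_congr rfl fun q' _ => ?_
          rw [map_smul, hbas, hχ, smul_smul]
        have h2 : (⇑(bas.repr w) : (S.MZ ⧸ S.MN) → ℂ) =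
            fun q' => bas.repr w q' * χ q' m := by
          conv_lhs => rw [hexp]
          exact bas.repr_sum_self _
        exact (congrFun h2 q).symm
      have hzero : ∀ q, q ≠ q₀ → bas.repr w q = 0 := by
        intro q hq
        obtain ⟨m, hm⟩ := hnt q hq
        have h3 := hcoord m q
        by_contra h0
        exact hm (mul_left_cancel₀ h0 (h3.trans (mul_one _).symm))
      have hw2 : w = bas.repr w q₀ • e q₀ := by
        conv_lhs => rw [← bas.sum_repr w]
        rw [Finset.sum_eq_single q₀]
        · rw [hbas]
        · intro q _ hq
          rw [hzero q hq, zero_smul]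
        · intro h
          exact absurd (Finset.mem_univ q₀) h
      rw [hw2]
      exact Submodule.smul_mem _ _ (Submodule.mem_span_singleton_self _)
    · rw [Submodule.span_le, Set.singleton_subset_iff, SetLike.mem_coe,
        Representation.mem_invariants]
      intro m
      rw [hχ q₀ m, hq₀' m, one_smul]
  rw [hinv_eq]
  exact finrank_span_singleton (henz q₀)
end

section
/- For the pair (Spin(16), N = Z/2) with M_X(N) identified with the group Jac(X)[2] of 2-torsion line bundles on X, the M_X(N)-invariant section σ ∈ H^0(M_X(Spin(16)), L_{Spin(16)}) is, up to scalar, σ = Σ_κ s_κ = Σ_{α ∈ Jac(X)[2]} α·s_{κ_0}, where {s_κ} is the basis indexed by the 4^g theta-characteristics κ of X normalized by s_{ακ_0} := α·s_{κ_0} using the canonical lift Jac(X)[2] ↪ G(L_{Spin(16)}) and a fixed theta-characteristic κ_0; the section σ does not depend on the choice of κ_0. (Section 7.1.2) -/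
/-!
Section 7.1.2 of Boysal–Pauly: for the pair `(Spin(16), N = ℤ/2)` with `M_X(N)`
identified with the group `Jac(X)[2]` of 2-torsion line bundles on `X`, the
`M_X(N)`-invariant section `σ ∈ H⁰(M_X(Spin(16)), L_{Spin(16)})` is, up to scalar,
`σ = Σ_κ s_κ = Σ_{α ∈ Jac(X)[2]} α·s_{κ₀}`, where `{s_κ}` is the basis indexed by the
`4^g` theta-characteristics `κ` of `X`, normalized by `s_{ακ₀} := α·s_{κ₀}` using the
canonical lift `Jac(X)[2] ↪ G(L_{Spin(16)})` and a fixed theta-characteristic `κ₀`;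
the section `σ` does not depend on the choice of `κ₀`.
-/

/-- Abstract data for Section 7.1.2: the Verlinde space
`V = H⁰(M_X(Spin(16)), L_{Spin(16)})`, the group `J = Jac(X)[2] ≅ M_X(N)` of
2-torsion line bundles acting on `V` through the canonical lift
`Jac(X)[2] ↪ G(L_{Spin(16)})`, the set `Θ` of theta-characteristics of `X` (a simply
transitive `J`-set of cardinality `4^g`), the basis `{s_κ}` of `V` indexed by `Θ`
(whose zero-divisors are supported on the divisors `D_κ`), a fixed
theta-characteristic `κ₀`, and the normalization `s_{ακ₀} = α·s_{κ₀}`. -/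
structure ThetaBasisSetup (g : ℕ) where
  /-- The Verlinde space `V = H⁰(M_X(Spin(16)), L_{Spin(16)})`. -/
  V : Type
  [addV : AddCommGroup V]
  [modV : Module ℂ V]
  [fdV : FiniteDimensional ℂ V]
  /-- The group `J = Jac(X)[2]` of 2-torsion line bundles on `X`, identified with
  `M_X(N)`. -/
  J : Type
  [grpJ : CommGroup J]
  [finJ : Fintype J]
  card_J : Fintype.card J = 4 ^ g
  /-- The set `Θ` of theta-characteristics of `X`. -/
  Θ : Type
  [finΘ : Fintype Θ]
  card_Θ : Fintype.card Θ = 4 ^ g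
  /-- `Jac(X)[2]` acts on theta-characteristics by `(α, κ) ↦ ακ`. -/
  [actJΘ : MulAction J Θ]
  /-- The action of `Jac(X)[2]` on `Θ` is simply transitive (every
  theta-characteristic `κ` equals `ακ₀` for a unique `α ∈ Jac(X)[2]`). -/
  simply_transitive : ∀ κ κ' : Θ, ∃! α : J, α • κ = κ'
  /-- The basis `{s_κ}` of `H⁰(M_X(Spin(16)), L_{Spin(16)})` indexed by the
  theta-characteristics of `X`. -/
  s : Module.Basis Θ ℂ V
  /-- The linear action of `J = Jac(X)[2] ≅ M_X(N)` on `V` through the canonical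
  lift `Jac(X)[2] ↪ G(L_{Spin(16)})`. -/
  ρ : Representation ℂ J V
  /-- The fixed theta-characteristic `κ₀`. -/
  κ₀ : Θ
  /-- The normalization of the basis: `s_{ακ₀} := α·s_{κ₀}`. -/
  normalization : ∀ α : J, s (α • κ₀) = ρ α (s κ₀)
  /-- A (nonzero) `M_X(N)`-invariant section `σ`. -/
  σ : V
  σ_invariant : σ ∈ ρ.invariants
  σ_ne : σ ≠ 0

attribute [instance] ThetaBasisSetup.addV ThetaBasisSetup.modV ThetaBasisSetup.fdV
  ThetaBasisSetup.grpJ ThetaBasisSetup.finJ ThetaBasisSetup.finΘ ThetaBasisSetup.actJΘ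

/-- **Section 7.1.2**: the `M_X(N)`-invariant section `σ` is, up to a nonzero scalar,
`σ = Σ_κ s_κ`; moreover `Σ_κ s_κ = Σ_{α ∈ Jac(X)[2]} α·s_{κ₀'}` for *every*
theta-characteristic `κ₀'`, so `σ` does not depend on the choice of `κ₀`. -/
theorem spin16_invariant_section (g : ℕ) (S : ThetaBasisSetup g) :
    (∃ c : ℂ, c ≠ 0 ∧ S.σ = c • ∑ κ : S.Θ, S.s κ) ∧
      ∀ κ₀' : S.Θ, (∑ κ : S.Θ, S.s κ) = ∑ α : S.J, S.ρ α (S.s κ₀') := by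

  classical
  -- ρ α permutes the basis: ρ α (s κ) = s (α • κ)
  have key : ∀ (α : S.J) (κ : S.Θ), S.ρ α (S.s κ) = S.s (α • κ) := by
    intro α κ
    obtain ⟨β, hβ, -⟩ := S.simply_transitive S.κ₀ κ
    have : S.ρ α (S.s (β • S.κ₀)) = S.s ((α * β) • S.κ₀) := by
      rw [S.normalization β, S.normalization (α * β), map_mul]
      rfl
    rw [← hβ, this, mul_smul]
  have sumeq : ∀ κ₀' : S.Θ, (∑ κ : S.Θ, S.s κ) = ∑ α : S.J, S.ρ α (S.s κ₀') := by
    intro κ₀'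
    have hbij : Function.Bijective (fun α : S.J => α • κ₀') := by
      constructor
      · intro a b hab
        obtain ⟨β, -, hu⟩ := S.simply_transitive κ₀' (a • κ₀')
        exact (hu a rfl).trans (hu b hab.symm).symm
      · intro κ
        obtain ⟨β, hβ, -⟩ := S.simply_transitive κ₀' κ
        exact ⟨β, hβ⟩
    rw [← (Equiv.ofBijective _ hbij).sum_comp S.s]
    exact Finset.sum_congr rfl fun α _ => (key α κ₀').symm
  refine ⟨?_, sumeq⟩
  set f : S.Θ → ℂ := fun κ => S.s.repr S.σ κ with hf
  have hσ : S.σ = ∑ κ : S.Θ, f κ • S.s κ := (S.s.sum_repr S.σ).symm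
  have hconst : ∀ κ : S.Θ, f κ = f S.κ₀ := by
    intro κ
    obtain ⟨α, hα, -⟩ := S.simply_transitive S.κ₀ κ
    have hinv : S.ρ α S.σ = S.σ := S.σ_invariant α
    have : S.ρ α S.σ = ∑ κ' : S.Θ, f (α⁻¹ • κ') • S.s κ' := by
      rw [hσ, map_sum]
      rw [← Equiv.sum_comp (MulAction.toPerm α : Equiv.Perm S.Θ)
        (fun κ' => f (α⁻¹ • κ') • S.s κ')]
      refine Finset.sum_congr rfl fun κ' _ => ?_
      simp [MulAction.toPerm_apply, key, inv_smul_smul, map_smul]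
    have h1 : ⇑(S.s.repr S.σ) = fun κ' => f (α⁻¹ • κ') := by
      rw [← hinv, this]
      exact S.s.repr_sum_self _
    exact (congrFun h1 κ).trans (by rw [← hα, inv_smul_smul])
  have hκ₀ : f S.κ₀ ≠ 0 := by
    intro h0
    apply S.σ_ne
    rw [hσ]
    refine Finset.sum_eq_zero fun κ _ => ?_
    rw [hconst κ, h0, zero_smul]
  refine ⟨f S.κ₀, hκ₀, ?_⟩
  rw [hσ, Finset.smul_sum]
  exact Finset.sum_congr rfl fun κ _ => by rw [hconst κ]
end
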